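/- Let s ≥ 0 and let v₁, v₂ be valuations given by integrable densities, each s-normalized. Let R be an axes-aligned rectangle with v₁(R) ≥ 7 and v₂(R) ≥ 7. Then there exist axes-aligned rectangles A₁, A₂ ⊆ R with d(A₁, A₂) ≥ s such that v₁(A₁) ≥ 1 and v₂(A₂) ≥ 1. -/

import Mathlib

open MeasureTheory

noncomputable section

/-- A point of the plane. -/
abbrev Pt := ℝ × ℝ

/-- The ℓ∞ distance between two points of the plane. -/
def linfDist (p q : Pt) : ℝ := max |p.1 - q.1| |p.2 - q.2|

/-- Two pieces of land are `s`-separated: every pair of points, one from each piece,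
is at ℓ∞ distance at least `s`. -/
def SepSets (s : ℝ) (A B : Set Pt) : Prop := ∀ p ∈ A, ∀ q ∈ B, s ≤ linfDist p q

/-- An axes-aligned rectangle `[a,b] × [c,d]` with `a < b` and `c < d`. -/
structure Rect where
  a : ℝ
  b : ℝ
  c : ℝ
  d : ℝ
  hab : a < b
  hcd : c < d

/-- The set of points of a rectangle. -/
def Rect.set (R : Rect) : Set Pt := Set.Icc R.a R.b ×ˢ Set.Icc R.c R.d

/-- The length of the shorter side of a rectangle. -/
def Rect.short (R : Rect) : ℝ := min (R.b - R.a) (R.d - R.c)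

/-- The length of the longer side of a rectangle. -/
def Rect.long (R : Rect) : ℝ := max (R.b - R.a) (R.d - R.c)

/-- A rectangle is `r`-fat if its longer side is at most `r` times its shorter side. -/
def Rect.Fat (r : ℝ) (R : Rect) : Prop := R.long ≤ r * R.short

/-- The value of a piece `Z` under the density `f`. -/
def val (f : Pt → ℝ) (Z : Set Pt) : ℝ := ∫ p in Z, f p

/-- The 1-out-of-`k` maximin share of an agent with density `f` on land `L`
with separation parameter `s`: the supremum over families of `k` axes-aligned
rectangles inside `L`, pairwise intersecting in zero measure and pairwise
`s`-separated, of the minimum value of a rectangle. -/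
def MMS (f : Pt → ℝ) (L : Set Pt) (s : ℝ) (k : ℕ) : ℝ :=
  sSup {t : ℝ | ∃ P : Fin k → Rect,
    (∀ j, (P j).set ⊆ L) ∧
    (∀ i j, i ≠ j → volume ((P i).set ∩ (P j).set) = 0) ∧
    (∀ i j, i ≠ j → SepSets s ((P i).set) ((P j).set)) ∧
    (∀ j, t ≤ val f ((P j).set))}

/-- A valuation given by density `f` is `s`-normalized: there are finitely many
pairwise `s`-separated axes-aligned rectangles, each of value at most 1,
such that `f` vanishes outside their union. -/
def SNormalized (s : ℝ) (f : Pt → ℝ) : Prop :=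
  ∃ (N : ℕ) (Q : Fin N → Rect),
    (∀ i j, i ≠ j → SepSets s ((Q i).set) ((Q j).set)) ∧
    (∀ i, val f ((Q i).set) ≤ 1) ∧
    (∀ p, p ∉ ⋃ i, (Q i).set → f p = 0)

/-- The unit square `[0,1] × [0,1]`. -/
def unitSquare : Set Pt := Set.Icc (0 : ℝ) 1 ×ˢ Set.Icc (0 : ℝ) 1

/-- `Guillotine s a0 a1 b0 b1 P`: the family `P` of rectangles forms an
`s`-separated guillotine partition of `[a0,a1] × [b0,b1]`. -/
inductive Guillotine (s : ℝ) : ℝ → ℝ → ℝ → ℝ → List Rect → Prop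
  | single (a0 a1 b0 b1 : ℝ) (P : Rect)
      (h : P.set ⊆ Set.Icc a0 a1 ×ˢ Set.Icc b0 b1) :
      Guillotine s a0 a1 b0 b1 [P]
  | vert (a0 a1 b0 b1 a : ℝ) (h1 : a0 < a) (h2 : a < a1 - s)
      (P1 P2 : List Rect)
      (g1 : Guillotine s a0 a b0 b1 P1)
      (g2 : Guillotine s (a + s) a1 b0 b1 P2) :
      Guillotine s a0 a1 b0 b1 (P1 ++ P2)
  | horiz (a0 a1 b0 b1 b : ℝ) (h1 : b0 < b) (h2 : b < b1 - s)
      (P1 P2 : List Rect)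
      (g1 : Guillotine s a0 a1 b0 b P1)
      (g2 : Guillotine s a0 a1 (b + s) b1 P2) :
      Guillotine s a0 a1 b0 b1 (P1 ++ P2)



namespace Stmt11Aux
open Set

theorem setIntegral_prod' (f : Pt → ℝ) (hf : Integrable f) (s t : Set ℝ) :
    ∫ z in s ×ˢ t, f z = ∫ x in s, ∫ y in t, f (x, y) := by
  rw [Measure.volume_eq_prod, ← Measure.prod_restrict]
  refine integral_prod f ?_
  rw [Measure.prod_restrict, ← Measure.volume_eq_prod]
  exact hf.integrableOn

theorem setIntegral_prod_symm' (f : Pt → ℝ) (hf : Integrable f) (s t : Set ℝ) :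
    ∫ z in s ×ˢ t, f z = ∫ y in t, ∫ x in s, f (x, y) := by
  rw [Measure.volume_eq_prod, ← Measure.prod_restrict]
  refine integral_prod_symm f ?_
  rw [Measure.prod_restrict, ← Measure.volume_eq_prod]
  exact hf.integrableOn

/-- X-marginal: integrate out y over `Icc c d`. -/
def margX (f : Pt → ℝ) (c d : ℝ) : ℝ → ℝ := fun x => ∫ y in Icc c d, f (x, y)

/-- Y-marginal: integrate out x over `Icc p q`. -/
def margY (f : Pt → ℝ) (p q : ℝ) : ℝ → ℝ := fun y => ∫ x in Icc p q, f (x, y)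

theorem margX_nonneg (f : Pt → ℝ) (hn : ∀ p, 0 ≤ f p) (c d x : ℝ) : 0 ≤ margX f c d x :=
  setIntegral_nonneg measurableSet_Icc fun y _ => hn (x, y)

theorem margY_nonneg (f : Pt → ℝ) (hn : ∀ p, 0 ≤ f p) (p q y : ℝ) : 0 ≤ margY f p q y :=
  setIntegral_nonneg measurableSet_Icc fun x _ => hn (x, y)

theorem integrable_margX (f : Pt → ℝ) (hf : Integrable f) (c d : ℝ) :
    Integrable (margX f c d) := by
  have hmeas : MeasurableSet ((univ : Set ℝ) ×ˢ Icc c d) :=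
    MeasurableSet.univ.prod measurableSet_Icc
  have hF : Integrable (((univ : Set ℝ) ×ˢ Icc c d).indicator f) := hf.indicator hmeas
  rw [Measure.volume_eq_prod] at hF
  have := hF.integral_prod_left
  refine this.congr (Filter.Eventually.of_forall fun x => ?_)
  have : (fun y => ((univ : Set ℝ) ×ˢ Icc c d).indicator f (x, y))
      = (Icc c d).indicator (fun y => f (x, y)) := by
    funext y
    by_cases hy : y ∈ Icc c d <;> simp [Set.indicator, hy]
  show (∫ y, ((univ : Set ℝ) ×ˢ Icc c d).indicator f (x, y)) = margX f c d x
  rw [this, integral_indicator measurableSet_Icc]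
  rfl

theorem integrable_margY (f : Pt → ℝ) (hf : Integrable f) (p q : ℝ) :
    Integrable (margY f p q) := by
  have hmeas : MeasurableSet ((Icc p q) ×ˢ (univ : Set ℝ)) :=
    measurableSet_Icc.prod MeasurableSet.univ
  have hF : Integrable (((Icc p q) ×ˢ (univ : Set ℝ)).indicator f) := hf.indicator hmeas
  rw [Measure.volume_eq_prod] at hF
  have := hF.integral_prod_right
  refine this.congr (Filter.Eventually.of_forall fun y => ?_)
  have : (fun x => ((Icc p q) ×ˢ (univ : Set ℝ)).indicator f (x, y))
      = (Icc p q).indicator (fun x => f (x, y)) := by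
    funext x
    by_cases hx : x ∈ Icc p q <;> simp [Set.indicator, hx]
  show (∫ x, ((Icc p q) ×ˢ (univ : Set ℝ)).indicator f (x, y)) = margY f p q y
  rw [this, integral_indicator measurableSet_Icc]
  rfl

theorem val_slabX (f : Pt → ℝ) (hf : Integrable f) {p q : ℝ} (hpq : p ≤ q) (r t : ℝ) :
    val f (Icc p q ×ˢ Icc r t) = ∫ x in p..q, margX f r t x := by
  rw [val, setIntegral_prod' f hf, intervalIntegral.integral_of_le hpq,
    ← integral_Icc_eq_integral_Ioc]
  rfl

theorem val_slabY (f : Pt → ℝ) (hf : Integrable f) (p q : ℝ) {r t : ℝ} (hrt : r ≤ t) :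
    val f (Icc p q ×ˢ Icc r t) = ∫ y in r..t, margY f p q y := by
  rw [val, setIntegral_prod_symm' f hf, intervalIntegral.integral_of_le hrt,
    ← integral_Icc_eq_integral_Ioc]
  rfl

/-- 1-D primitive -/
def prim (g : ℝ → ℝ) (l : ℝ) : ℝ → ℝ := fun t => ∫ x in l..t, g x

theorem prim_cont (g : ℝ → ℝ) (hg : Integrable g) (l : ℝ) : Continuous (prim g l) :=
  hg.continuous_primitive l

theorem prim_sub (g : ℝ → ℝ) (hg : Integrable g) (l p q : ℝ) :
    prim g l q - prim g l p = ∫ x in p..q, g x := by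
  have h := intervalIntegral.integral_add_adjacent_intervals
    (hg.intervalIntegrable (a := l) (b := p)) (hg.intervalIntegrable (a := p) (b := q))
  simp only [prim]
  linarith

theorem prim_mono (g : ℝ → ℝ) (hg : Integrable g) (h0 : ∀ x, 0 ≤ g x) (l : ℝ) :
    Monotone (prim g l) := by
  intro t t' h
  have h1 := prim_sub g hg l t t'
  have h2 : 0 ≤ ∫ x in t..t', g x :=
    intervalIntegral.integral_nonneg h fun x _ => h0 x
  linarith

theorem prim_self (g : ℝ → ℝ) (l : ℝ) : prim g l l = 0 := intervalIntegral.integral_same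

theorem exists_prim_eq (g : ℝ → ℝ) (hg : Integrable g) {l r A : ℝ} (hlr : l ≤ r)
    (h1 : 0 ≤ A) (h2 : A ≤ prim g l r) :
    ∃ t ∈ Icc l r, prim g l t = A := by
  have hivt := intermediate_value_Icc hlr (prim_cont g hg l).continuousOn
  have : A ∈ Icc (prim g l l) (prim g l r) := by
    rw [prim_self]; exact ⟨h1, h2⟩
  obtain ⟨t, ht, hteq⟩ := hivt this
  exact ⟨t, ht, hteq⟩


theorem rect_meas (R : Rect) : MeasurableSet R.set :=
  measurableSet_Icc.prod measurableSet_Icc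

theorem val_mono (f : Pt → ℝ) (hf : Integrable f) (hn : ∀ p, 0 ≤ f p) {A B : Set Pt}
    (hAB : A ⊆ B) : val f A ≤ val f B :=
  setIntegral_mono_set hf.integrableOn (ae_of_all _ hn) (HasSubset.Subset.eventuallyLE hAB)

/-- Band lemma: a band of height `s` over a strip of width `< s` has value at most 1. -/
theorem band {s : ℝ} (hs : 0 < s) (f : Pt → ℝ) (hi : Integrable f) (hn : ∀ p, 0 ≤ f p)
    (hsn : SNormalized s f) {p q : ℝ} (hw : q - p < s) (u : ℝ) :
    val f (Icc p q ×ˢ Icc u (u + s)) ≤ 1 := by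
  obtain ⟨N, Q, hsep, hval, hzero⟩ := hsn
  set S : Set Pt := Icc p q ×ˢ Icc u (u + s) with hSdef
  have hSmeas : MeasurableSet S := measurableSet_Icc.prod measurableSet_Icc
  set U : Set Pt := ⋃ i, (Q i).set with hUdef
  have hUmeas : MeasurableSet U := MeasurableSet.iUnion fun i => rect_meas (Q i)
  -- value of S equals integral over S ∩ U
  have hval_eq : val f S = ∫ z in S ∩ U, f z := by
    have h1 : ∀ z, f z = U.indicator f z := by
      intro z
      by_cases hz : z ∈ U
      · simp [Set.indicator, hz]
      · simp [Set.indicator, hz, hzero z hz]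
    calc val f S = ∫ z in S, U.indicator f z := by
          rw [val]; exact setIntegral_congr_fun hSmeas fun z _ => h1 z
      _ = ∫ z in S ∩ U, f z := setIntegral_indicator hUmeas
  -- each rectangle meeting S in positive measure yields an interior-ish point
  have hmid : ∀ k : Fin N, volume ((Q k).set ∩ S) ≠ 0 →
      ∃ z : Pt, z ∈ (Q k).set ∧ p ≤ z.1 ∧ z.1 ≤ q ∧ u < z.2 ∧ z.2 < u + s := by
    intro k hk
    set A := max (Q k).a p
    set B := min (Q k).b q
    set C := max (Q k).c u
    set D := min (Q k).d (u + s)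
    have hset : (Q k).set ∩ S = Icc A B ×ˢ Icc C D := by
      rw [Rect.set, hSdef, Set.prod_inter_prod]
      simp only [Set.Icc_inter_Icc]
      rfl
    have hvol : volume ((Q k).set ∩ S) = volume (Icc A B) * volume (Icc C D) := by
      rw [hset, Measure.volume_eq_prod]
      exact Measure.prod_prod _ _
    rw [hvol, Real.volume_Icc, Real.volume_Icc] at hk
    have hAB : A < B := by
      by_contra h
      push_neg at h
      apply hk
      rw [ENNReal.ofReal_eq_zero.mpr (by linarith), zero_mul]
    have hCD : C < D := by
      by_contra h
      push_neg at h
      apply hk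
      rw [ENNReal.ofReal_eq_zero.mpr (by linarith : D - C ≤ 0), mul_zero]
    refine ⟨((A + B) / 2, (C + D) / 2), ?_, ?_, ?_, ?_, ?_⟩
    · constructor
      · constructor
        · have : (Q k).a ≤ A := le_max_left _ _
          dsimp only; linarith
        · have : B ≤ (Q k).b := min_le_left _ _
          dsimp only; linarith
      · constructor
        · have : (Q k).c ≤ C := le_max_left _ _
          dsimp only; linarith
        · have : D ≤ (Q k).d := min_le_left _ _
          dsimp only; linarith
    · have : p ≤ A := le_max_right _ _
      dsimp only; linarith
    · have : B ≤ q := min_le_right _ _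
      dsimp only; linarith
    · have : u ≤ C := le_max_right _ _
      dsimp only; linarith
    · have : D ≤ u + s := min_le_right _ _
      dsimp only; linarith
  -- at most one rectangle meets S in positive measure
  have key : ∀ i j : Fin N, volume ((Q i).set ∩ S) ≠ 0 → volume ((Q j).set ∩ S) ≠ 0 → i = j := by
    intro i j hi' hj'
    by_contra hij
    obtain ⟨z, hz, hz1, hz2, hz3, hz4⟩ := hmid i hi'
    obtain ⟨w, hw', hw1, hw2, hw3, hw4⟩ := hmid j hj'
    have hsepij := hsep i j hij z hz w hw'
    have h1 : |z.1 - w.1| < s := by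
      rw [abs_sub_lt_iff]; constructor <;> linarith
    have h2 : |z.2 - w.2| < s := by
      rw [abs_sub_lt_iff]; constructor <;> linarith
    have : linfDist z w < s := max_lt h1 h2
    linarith
  by_cases hE : ∃ i, volume ((Q i).set ∩ S) ≠ 0
  · obtain ⟨i0, hi0⟩ := hE
    have hnull : volume ((S ∩ U) \ ((Q i0).set ∩ S)) = 0 := by
      have hsub : (S ∩ U) \ ((Q i0).set ∩ S) ⊆
          ⋃ i, (((Q i).set ∩ S) \ ((Q i0).set ∩ S)) := by
        rintro z ⟨⟨hzS, hzU⟩, hznot⟩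
        obtain ⟨_, ⟨i, rfl⟩, hzi⟩ := hzU
        exact Set.mem_iUnion.mpr ⟨i, ⟨⟨hzi, hzS⟩, hznot⟩⟩
      refine measure_mono_null hsub (measure_iUnion_null fun i => ?_)
      by_cases h : i = i0
      · subst h; simp
      · have hz : volume ((Q i).set ∩ S) = 0 := by
          by_contra h'
          exact h (key i i0 h' hi0)
        exact measure_mono_null Set.diff_subset hz
    set T1 : Set Pt := S ∩ U with hT1
    set T2 : Set Pt := (Q i0).set ∩ S with hT2
    have hae : T1 =ᵐ[volume] T2 := by
      have h2 : volume (((Q i0).set ∩ S) \ (S ∩ U)) = 0 := by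
        have : ((Q i0).set ∩ S) \ (S ∩ U) = ∅ := by
          rw [Set.diff_eq_empty]
          rintro z ⟨hzi, hzS⟩
          exact ⟨hzS, Set.mem_iUnion.mpr ⟨i0, hzi⟩⟩
        rw [this]; simp
      exact MeasureTheory.ae_eq_set.mpr ⟨hnull, h2⟩
    calc val f S = ∫ z in S ∩ U, f z := hval_eq
      _ = ∫ z in (Q i0).set ∩ S, f z := setIntegral_congr_set hae
      _ ≤ val f (Q i0).set := val_mono f hi hn Set.inter_subset_left
      _ ≤ 1 := hval i0
  · push_neg at hE
    have : volume (S ∩ U) = 0 := by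
      rw [hUdef, Set.inter_iUnion]
      exact measure_iUnion_null fun i => by
        rw [Set.inter_comm]; exact hE i
    rw [hval_eq, Measure.restrict_eq_zero.mpr this]
    simp


theorem sepsets_symm {s : ℝ} {A B : Set Pt} (h : SepSets s A B) : SepSets s B A := by
  intro p hp q hq
  simpa [linfDist, abs_sub_comm] using h q hq p hp

theorem sep_vert {s x y : ℝ} (h : x + s ≤ y) {I J : Set ℝ} {t t' : Set ℝ}
    (hI : ∀ z ∈ I, z ≤ x) (hJ : ∀ z ∈ J, y ≤ z) :
    SepSets s (I ×ˢ t) (J ×ˢ t') := by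
  rintro p ⟨hp1, _⟩ q ⟨hq1, _⟩
  have h1 : q.1 - p.1 ≤ |p.1 - q.1| := by
    rw [abs_sub_comm]; exact le_abs_self _
  have : s ≤ |p.1 - q.1| := le_trans (by have := hI p.1 hp1; have := hJ q.1 hq1; linarith) h1
  exact le_trans this (le_max_left _ _)

theorem sep_horiz {s x y : ℝ} (h : x + s ≤ y) {I J : Set ℝ} {t t' : Set ℝ}
    (hI : ∀ z ∈ t, z ≤ x) (hJ : ∀ z ∈ t', y ≤ z) :
    SepSets s (I ×ˢ t) (J ×ˢ t') := by
  rintro p ⟨_, hp2⟩ q ⟨_, hq2⟩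
  have h1 : q.2 - p.2 ≤ |p.2 - q.2| := by
    rw [abs_sub_comm]; exact le_abs_self _
  have : s ≤ |p.2 - q.2| := le_trans (by have := hI p.2 hp2; have := hJ q.2 hq2; linarith) h1
  exact le_trans this (le_max_right _ _)

/-- Core lemma: one agent has mass ≥ 5 concentrated in a thin vertical strip,
the other has mass ≥ 2 on the whole rectangle. -/
theorem core {s : ℝ} (hs : 0 < s) (f1 f2 : Pt → ℝ) (hi1 : Integrable f1) (hi2 : Integrable f2)
    (hn1 : ∀ p, 0 ≤ f1 p) (hn2 : ∀ p, 0 ≤ f2 p) (hsn2 : SNormalized s f2)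
    {a b c d p q : ℝ} (hab : a < b) (hcd : c < d) (hpq : p < q) (hw : q - p < s)
    (hap : a ≤ p) (hqb : q ≤ b)
    (hv1 : 2 ≤ val f1 (Icc a b ×ˢ Icc c d))
    (hv2 : 5 ≤ val f2 (Icc p q ×ˢ Icc c d)) :
    ∃ A1 A2 : Rect, A1.set ⊆ Icc a b ×ˢ Icc c d ∧ A2.set ⊆ Icc a b ×ˢ Icc c d ∧
      SepSets s A1.set A2.set ∧ 1 ≤ val f1 A1.set ∧ 1 ≤ val f2 A2.set := by
  set g1 := margY f1 a b with hg1
  set g2 := margY f2 p q with hg2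
  have hgi1 : Integrable g1 := integrable_margY f1 hi1 a b
  have hgi2 : Integrable g2 := integrable_margY f2 hi2 p q
  have hgn1 : ∀ y, 0 ≤ g1 y := margY_nonneg f1 hn1 a b
  have hgn2 : ∀ y, 0 ≤ g2 y := margY_nonneg f2 hn2 p q
  set L : ℝ → ℝ := prim g1 c with hL
  set K : ℝ → ℝ := prim g2 c with hK
  have hLmono : Monotone L := prim_mono g1 hgi1 hgn1 c
  have hKmono : Monotone K := prim_mono g2 hgi2 hgn2 c
  -- value of horizontal slabs
  have hval1 : ∀ {r t : ℝ}, r ≤ t → val f1 (Icc a b ×ˢ Icc r t) = L t - L r := by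
    intro r t hrt
    rw [val_slabY f1 hi1 a b hrt, hL, prim_sub g1 hgi1 c r t]
  have hval2 : ∀ {r t : ℝ}, r ≤ t → val f2 (Icc p q ×ˢ Icc r t) = K t - K r := by
    intro r t hrt
    rw [val_slabY f2 hi2 p q hrt, hK, prim_sub g2 hgi2 c r t]
  have hLc : L c = 0 := prim_self g1 c
  have hKc : K c = 0 := prim_self g2 c
  have hLd : 2 ≤ L d := by
    have := hval1 hcd.le; linarith
  have hKd : 5 ≤ K d := by
    have := hval2 hcd.le; linarith
  -- band bound for f2
  have hband : ∀ u : ℝ, c ≤ u → K (u + s) - K u ≤ 1 := by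
    intro u hu
    have h1 : K (u + s) - K u = val f2 (Icc p q ×ˢ Icc u (u + s)) := by
      rw [hval2 (by linarith)]
    rw [h1]
    exact band hs f2 hi2 hn2 hsn2 hw u
  -- pick the level where agent 1's bottom mass is exactly 1
  obtain ⟨u1, hu1mem, hu1⟩ : ∃ t ∈ Icc c d, L t = 1 := by
    refine exists_prim_eq g1 hgi1 hcd.le (by norm_num) ?_
    rw [← hL]; linarith
  have hcu1 : c < u1 := by
    rcases eq_or_lt_of_le hu1mem.1 with h | h
    · exfalso; rw [← h] at hu1; rw [hLc] at hu1; norm_num at hu1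
    · exact h
  have hu1d : u1 < d := by
    rcases eq_or_lt_of_le hu1mem.2 with h | h
    · exfalso; rw [h] at hu1; linarith
    · exact h
  by_cases hcase : K u1 ≤ 3
  · -- agent 1 gets the bottom, agent 2 gets the top of the strip
    have hu1sd : u1 + s < d := by
      by_contra h
      push_neg at h
      have h1 : K d ≤ K (u1 + s) := hKmono h
      have h2 := hband u1 hcu1.le
      linarith
    refine ⟨⟨a, b, c, u1, hab, hcu1⟩, ⟨p, q, u1 + s, d, hpq, hu1sd⟩, ?_, ?_, ?_, ?_, ?_⟩
    · exact Set.prod_mono (Set.Icc_subset_Icc le_rfl le_rfl) (Set.Icc_subset_Icc le_rfl hu1d.le)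
    · exact Set.prod_mono (Set.Icc_subset_Icc hap hqb)
        (Set.Icc_subset_Icc (by dsimp only; linarith) le_rfl)
    · exact sep_horiz (le_refl (u1 + s)) (fun z hz => (by exact hz.2 : z ≤ u1))
        (fun z hz => (by exact hz.1 : u1 + s ≤ z))
    · rw [Rect.set]
      dsimp only
      rw [hval1 hcu1.le, hu1, hLc]
      norm_num
    · rw [Rect.set]
      dsimp only
      rw [hval2 (by linarith)]
      have h2 := hband u1 hcu1.le
      have h3 : K (u1 + s) ≤ K u1 + 1 := by linarith
      linarith
  · push_neg at hcase
    -- agent 2 gets the bottom of the strip, agent 1 gets the top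
    have hcu1s : c < u1 - s := by
      by_contra h
      push_neg at h
      have h1 : K u1 ≤ K (c + s) := hKmono (by linarith)
      have h2 := hband c le_rfl
      rw [hKc] at h2
      linarith
    refine ⟨⟨a, b, u1, d, hab, hu1d⟩, ⟨p, q, c, u1 - s, hpq, hcu1s⟩, ?_, ?_, ?_, ?_, ?_⟩
    · exact Set.prod_mono (Set.Icc_subset_Icc le_rfl le_rfl) (Set.Icc_subset_Icc hcu1.le le_rfl)
    · exact Set.prod_mono (Set.Icc_subset_Icc hap hqb)
        (Set.Icc_subset_Icc le_rfl (by dsimp only; linarith))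
    · refine sepsets_symm (sep_horiz (by linarith : (u1 - s) + s ≤ u1)
        (fun z hz => (by exact hz.2 : z ≤ u1 - s)) (fun z hz => (by exact hz.1 : u1 ≤ z)))
    · rw [Rect.set]
      dsimp only
      rw [hval1 hu1d.le, hu1]
      linarith
    · rw [Rect.set]
      dsimp only
      rw [hval2 (by linarith : c ≤ u1 - s), hKc]
      have h2 := hband (u1 - s) hcu1s.le
      have h3 : u1 - s + s = u1 := by ring
      rw [h3] at h2
      linarith

end Stmt11Aux

open Stmt11Aux Set in
/-- Two `s`-normalized agents valuing a rectangle at least 7 each can each get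
an `s`-separated sub-rectangle of value at least 1. -/
theorem stmt11 (s : ℝ) (hs : 0 ≤ s) (f1 f2 : Pt → ℝ)
    (hi1 : Integrable f1) (hi2 : Integrable f2)
    (hn1 : ∀ p, 0 ≤ f1 p) (hn2 : ∀ p, 0 ≤ f2 p)
    (hs1 : SNormalized s f1) (hs2 : SNormalized s f2)
    (R : Rect) (hv1 : 7 ≤ val f1 R.set) (hv2 : 7 ≤ val f2 R.set) :
    ∃ A1 A2 : Rect, A1.set ⊆ R.set ∧ A2.set ⊆ R.set ∧
      SepSets s A1.set A2.set ∧
      1 ≤ val f1 A1.set ∧ 1 ≤ val f2 A2.set := by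
  rcases eq_or_lt_of_le hs with hs0 | hs0
  · -- trivial case s = 0
    refine ⟨R, R, le_refl _, le_refl _, ?_, by linarith, by linarith⟩
    intro p _ q _
    rw [← hs0]
    exact le_max_of_le_left (abs_nonneg _)
  -- main case s > 0
  obtain ⟨a, b, c, d, hab, hcd⟩ := R
  have hRset : Rect.set ⟨a, b, c, d, hab, hcd⟩ = Icc a b ×ˢ Icc c d := rfl
  rw [hRset] at hv1 hv2 ⊢
  set g1 := margX f1 c d with hg1
  set g2 := margX f2 c d with hg2
  have hgi1 : Integrable g1 := integrable_margX f1 hi1 c d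
  have hgi2 : Integrable g2 := integrable_margX f2 hi2 c d
  have hgn1 : ∀ x, 0 ≤ g1 x := margX_nonneg f1 hn1 c d
  have hgn2 : ∀ x, 0 ≤ g2 x := margX_nonneg f2 hn2 c d
  set F1 : ℝ → ℝ := prim g1 a with hF1
  set F2 : ℝ → ℝ := prim g2 a with hF2
  have hF1mono : Monotone F1 := prim_mono g1 hgi1 hgn1 a
  have hF2mono : Monotone F2 := prim_mono g2 hgi2 hgn2 a
  have hval1 : ∀ {r t : ℝ}, r ≤ t → val f1 (Icc r t ×ˢ Icc c d) = F1 t - F1 r := by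
    intro r t hrt
    rw [val_slabX f1 hi1 hrt c d, hF1, prim_sub g1 hgi1 a r t]
  have hval2 : ∀ {r t : ℝ}, r ≤ t → val f2 (Icc r t ×ˢ Icc c d) = F2 t - F2 r := by
    intro r t hrt
    rw [val_slabX f2 hi2 hrt c d, hF2, prim_sub g2 hgi2 a r t]
  have hF1a : F1 a = 0 := prim_self g1 a
  have hF2a : F2 a = 0 := prim_self g2 a
  have hF1b : 7 ≤ F1 b := by have := hval1 hab.le; linarith
  have hF2b : 7 ≤ F2 b := by have := hval2 hab.le; linarith
  -- quantile points
  obtain ⟨x1, hx1mem, hx1⟩ : ∃ t ∈ Icc a b, F1 t = 1 :=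
    exists_prim_eq g1 hgi1 hab.le (by norm_num) (by rw [← hF1]; linarith)
  obtain ⟨x2, hx2mem, hx2⟩ : ∃ t ∈ Icc a b, F2 t = 1 :=
    exists_prim_eq g2 hgi2 hab.le (by norm_num) (by rw [← hF2]; linarith)
  obtain ⟨y1, hy1mem, hy1⟩ : ∃ t ∈ Icc a b, F1 t = F1 b - 1 :=
    exists_prim_eq g1 hgi1 hab.le (by linarith) (by rw [← hF1]; linarith)
  obtain ⟨y2, hy2mem, hy2⟩ : ∃ t ∈ Icc a b, F2 t = F2 b - 1 :=
    exists_prim_eq g2 hgi2 hab.le (by linarith) (by rw [← hF2]; linarith)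
  have hax1 : a < x1 := by
    rcases eq_or_lt_of_le hx1mem.1 with h | h
    · exfalso; rw [← h, hF1a] at hx1; norm_num at hx1
    · exact h
  have hax2 : a < x2 := by
    rcases eq_or_lt_of_le hx2mem.1 with h | h
    · exfalso; rw [← h, hF2a] at hx2; norm_num at hx2
    · exact h
  have hy1b : y1 < b := by
    rcases eq_or_lt_of_le hy1mem.2 with h | h
    · exfalso; rw [h] at hy1; linarith
    · exact h
  have hy2b : y2 < b := by
    rcases eq_or_lt_of_le hy2mem.2 with h | h
    · exfalso; rw [h] at hy2; linarith
    · exact h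
  have hx1y1 : x1 < y1 := by
    by_contra h
    push_neg at h
    have := hF1mono h
    rw [hx1, hy1] at this
    linarith
  have hx2y2 : x2 < y2 := by
    by_contra h
    push_neg at h
    have := hF2mono h
    rw [hx2, hy2] at this
    linarith
  by_cases hA : x1 + s ≤ y2
  · -- agent 1 left, agent 2 right
    refine ⟨⟨a, x1, c, d, hax1, hcd⟩, ⟨y2, b, c, d, hy2b, hcd⟩, ?_, ?_, ?_, ?_, ?_⟩
    · rw [Rect.set]
      exact Set.prod_mono (Set.Icc_subset_Icc le_rfl hx1mem.2) (Set.Icc_subset_Icc le_rfl le_rfl)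
    · rw [Rect.set]
      exact Set.prod_mono (Set.Icc_subset_Icc hy2mem.1 le_rfl) (Set.Icc_subset_Icc le_rfl le_rfl)
    · exact sep_vert hA (fun z hz => hz.2) (fun z hz => hz.1)
    · rw [Rect.set]; dsimp only
      rw [hval1 hax1.le, hx1, hF1a]; norm_num
    · rw [Rect.set]; dsimp only
      rw [hval2 hy2b.le, hy2]; linarith
  by_cases hB : x2 + s ≤ y1
  · -- agent 2 left, agent 1 right
    refine ⟨⟨y1, b, c, d, hy1b, hcd⟩, ⟨a, x2, c, d, hax2, hcd⟩, ?_, ?_, ?_, ?_, ?_⟩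
    · rw [Rect.set]
      exact Set.prod_mono (Set.Icc_subset_Icc hy1mem.1 le_rfl) (Set.Icc_subset_Icc le_rfl le_rfl)
    · rw [Rect.set]
      exact Set.prod_mono (Set.Icc_subset_Icc le_rfl hx2mem.2) (Set.Icc_subset_Icc le_rfl le_rfl)
    · exact sepsets_symm (sep_vert hB (fun z hz => hz.2) (fun z hz => hz.1))
    · rw [Rect.set]; dsimp only
      rw [hval1 hy1b.le, hy1]; linarith
    · rw [Rect.set]; dsimp only
      rw [hval2 hax2.le, hx2, hF2a]; norm_num
  push_neg at hA hB
  rcases le_total x1 x2 with hx12 | hx21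
  · -- agent 2's middle strip is thin
    have hw : y2 - x2 < s := by linarith
    have hv2' : 5 ≤ val f2 (Icc x2 y2 ×ˢ Icc c d) := by
      rw [hval2 hx2y2.le, hx2, hy2]; linarith
    exact core hs0 f1 f2 hi1 hi2 hn1 hn2 hs2 hab hcd hx2y2 hw hx2mem.1 hy2mem.2
      (by linarith) hv2'
  · -- agent 1's middle strip is thin; swap the roles of the agents
    have hw : y1 - x1 < s := by linarith
    have hv1' : 5 ≤ val f1 (Icc x1 y1 ×ˢ Icc c d) := by
      rw [hval1 hx1y1.le, hx1, hy1]; linarith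
    obtain ⟨A1, A2, hA1, hA2, hsep, hva, hvb⟩ :=
      core hs0 f2 f1 hi2 hi1 hn2 hn1 hs1 hab hcd hx1y1 hw hx1mem.1 hy1mem.2
        (by linarith) hv1'
    exact ⟨A2, A1, hA2, hA1, sepsets_symm hsep, hvb, hva⟩
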